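/- Let H, V, W, a, L be as follows: H a real Hilbert space, V ⊆ H a dense Hilbert subspace with ‖v‖ ≤ C‖v‖₁, W ⊆ V finite-dimensional, a : V × V → ℝ bounded and coercive on V, and L : H → W the H-orthogonal projection. Let R : V → W be the Ritz projection with respect to a. Then for all w ∈ V: ‖w − Lw‖₁ ≤ c ‖w − Rw‖₁, where c depends only on the continuity and coercivity constants of a and on an inverse inequality constant C_inv for which ‖χ‖₁ ≤ C_inv ρ ‖χ‖ holds for all χ ∈ W (ρ a fixed parameter), together with the approximation property ‖w − Lw‖ ≤ ‖w − Rw‖ and ‖Rw − Lw‖ ∈ W. -/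

import Mathlib

/-- Comparison of the `L²`-projection and Ritz-projection errors in the `H¹`-norm
(`‖w − L_h w‖₁ ≤ c ‖w − R_h w‖₁`): `H` plays the role of `L²(Ω)`, `V` (embedded by
`e`) that of `H₀¹(Ω)`, `W ⊆ V` is the finite-dimensional finite element space,
`L` the `H`-orthogonal projection onto `W`, `R` the Ritz projection with respect to
the bounded coercive form `a`; the inverse inequality `‖χ‖₁ ≤ C_inv ρ ‖χ‖` holds on
`W` and `L` has the best-approximation property in the `H`-norm. -/
theorem stmt_13 {H V : Type*} [NormedAddCommGroup H] [InnerProductSpace ℝ H] [CompleteSpace H]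
    [NormedAddCommGroup V] [InnerProductSpace ℝ V] [CompleteSpace V]
    (e : V →L[ℝ] H) (he : DenseRange e) (C : ℝ) (hC : 0 < C)
    (heC : ∀ v : V, ‖e v‖ ≤ C * ‖v‖)
    (W : Submodule ℝ V) [FiniteDimensional ℝ W]
    (a : V →ₗ[ℝ] V →ₗ[ℝ] ℝ) (α γ : ℝ) (hα : 0 < α) (hγ : 0 < γ)
    (hbound : ∀ v w : V, |a v w| ≤ α * ‖v‖ * ‖w‖)
    (hcoer : ∀ v : V, γ * ‖v‖ ^ 2 ≤ a v v)
    (Cinv ρ : ℝ) (hCinv : 0 < Cinv) (hρ : 0 < ρ)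
    (hinv : ∀ χ : W, ‖(χ : V)‖ ≤ Cinv * ρ * ‖e (χ : V)‖) :
    ∃ c > (0:ℝ), ∀ (L : H → W) (R : V → W),
      -- `L` is the `H`-orthogonal projection onto `W`
      (∀ (x : H), ∀ v ∈ W, (inner ℝ (x - e ((L x : W) : V)) (e v) : ℝ) = 0) →
      -- `R` is the Ritz projection with respect to `a`
      (∀ (w : V), ∀ v ∈ W, a ((R w : W) : V) v = a w v) →
      -- best-approximation property of `L` in the `H`-norm
      (∀ w : V, ‖e w - e ((L (e w) : W) : V)‖ ≤ ‖e w - e ((R w : W) : V)‖) →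
      ∀ w : V, ‖w - ((L (e w) : W) : V)‖ ≤ c * ‖w - ((R w : W) : V)‖ := by
  refine ⟨1 + 2 * Cinv * ρ * C, by positivity, ?_⟩
  intro L R _ _ hbest w
  set Lw : V := ((L (e w) : W) : V)
  set Rw : V := ((R w : W) : V)
  have h1 : ‖w - Lw‖ ≤ ‖w - Rw‖ + ‖Rw - Lw‖ := by
    calc ‖w - Lw‖ = ‖(w - Rw) + (Rw - Lw)‖ := by congr 1; abel
      _ ≤ ‖w - Rw‖ + ‖Rw - Lw‖ := norm_add_le _ _
  have h2 : ‖Rw - Lw‖ ≤ Cinv * ρ * ‖e Rw - e Lw‖ := by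
    have := hinv (R w - L (e w))
    simpa [map_sub] using this
  have h3 : ‖e Rw - e Lw‖ ≤ 2 * ‖e w - e Rw‖ := by
    calc ‖e Rw - e Lw‖ = ‖-(e w - e Rw) + (e w - e Lw)‖ := by congr 1; abel
      _ ≤ ‖-(e w - e Rw)‖ + ‖e w - e Lw‖ := norm_add_le _ _
      _ = ‖e w - e Rw‖ + ‖e w - e Lw‖ := by rw [norm_neg]
      _ ≤ ‖e w - e Rw‖ + ‖e w - e Rw‖ := by linarith [hbest w]
      _ = 2 * ‖e w - e Rw‖ := by ring
  have h4 : ‖e w - e Rw‖ ≤ C * ‖w - Rw‖ := by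
    have := heC (w - Rw)
    simpa [map_sub] using this
  calc ‖w - Lw‖ ≤ ‖w - Rw‖ + ‖Rw - Lw‖ := h1
    _ ≤ ‖w - Rw‖ + Cinv * ρ * (2 * (C * ‖w - Rw‖)) := by
        have h5 : ‖Rw - Lw‖ ≤ Cinv * ρ * (2 * (C * ‖w - Rw‖)) := by
          refine h2.trans ?_
          have : ‖e Rw - e Lw‖ ≤ 2 * (C * ‖w - Rw‖) := by nlinarith
          exact mul_le_mul_of_nonneg_left this (by positivity)
        linarith
    _ = (1 + 2 * Cinv * ρ * C) * ‖w - Rw‖ := by ring
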